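/- Let A be the adjacency matrix of a graph G on N nodes with Laplacian Q = Δ − A, whose eigenvalues are ordered 0 = μ_N ≤ μ_{N−1} ≤ … ≤ μ_1. Let S_k and S_m be two disjoint subsets of the node set of sizes N_k and N_m respectively, with indicator vectors s_k and s_m, and let ã_{km} = (s_kᵀ A s_m)/(N_k·N_m) denote the link density between S_k and S_m. Let θ ≥ 0 satisfy |N·ã_{km} − μ_i| ≤ θ for all 1 ≤ i ≤ N−1. Then for every Bernoulli vector w ∈ {0,1}^N, writing w̃_k = s_kᵀw and w̃_m = s_mᵀw, the number of links between the nodes of S_k outside the support of w and the nodes of S_m inside the support of w satisfies: |((u−w)∘s_k)ᵀ A (w∘s_m) − ã_{km}(N_k − w̃_k)·w̃_m| ≤ (θ/N)·√(w̃_m(N − w̃_m)(N_k − w̃_k)(N − N_k + w̃_k)), where ∘ denotes the elementwise (Hadamard) product and u the all-ones vector. -/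

import Mathlib

open Matrix

set_option maxHeartbeats 1600000 in
/-- Topological approximation for general graphs.  `A` is the adjacency matrix
of a simple graph on `N` nodes, with Laplacian eigenvalues
`μ 0 ≥ μ 1 ≥ … ≥ μ (N-1) = 0` realized by an orthonormal eigenbasis `z`.
`Sk`, `Sm` are disjoint node subsets with indicator vectors `sk`, `sm`,
`ã = (skᵀ A sm)/(N_k N_m)` is the link density, and `θ` bounds
`|N ã - μ_i|` for all eigenvalues but the last.  Then the cut-set between the
nodes of `Sk` outside the support of the Bernoulli vector `w` and the nodes of
`Sm` inside its support is approximated by `ã (N_k - w̃_k) w̃_m` with the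
stated error bound. -/
theorem topological_approx_general_graph
    (N : ℕ) (hN : 0 < N)
    (A : Matrix (Fin N) (Fin N) ℝ)
    (hAsymm : A.IsSymm)
    (hA01 : ∀ i j, A i j = 0 ∨ A i j = 1)
    (hAdiag : ∀ i, A i i = 0)
    (μ : Fin N → ℝ) (z : Fin N → (Fin N → ℝ))
    (hz_orth : ∀ i j, z i ⬝ᵥ z j = if i = j then (1 : ℝ) else 0)
    (hz_eig : ∀ i,
      (Matrix.diagonal (fun k => ∑ j, A k j) - A).mulVec (z i) = μ i • z i)
    (hμ_mono : Antitone μ)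
    (hμ_last : μ ⟨N - 1, by omega⟩ = 0)
    (Sk Sm : Finset (Fin N))
    (hdisj : Disjoint Sk Sm)
    (sk sm : Fin N → ℝ)
    (hsk : sk = fun i => if i ∈ Sk then (1 : ℝ) else 0)
    (hsm : sm = fun i => if i ∈ Sm then (1 : ℝ) else 0)
    (Nk Nm : ℝ) (hNk : Nk = Sk.card) (hNm : Nm = Sm.card)
    (akm : ℝ) (hakm : akm = (sk ⬝ᵥ A.mulVec sm) / (Nk * Nm))
    (θ : ℝ) (hθ0 : 0 ≤ θ)
    (hθ : ∀ i : Fin N, (i : ℕ) < N - 1 → |N * akm - μ i| ≤ θ)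
    (w : Fin N → ℝ)
    (hw : ∀ i, w i = 0 ∨ w i = 1) :
    |(fun i => (1 - w i) * sk i) ⬝ᵥ A.mulVec (fun i => w i * sm i) -
        akm * ((Nk - sk ⬝ᵥ w) * (sm ⬝ᵥ w))| ≤
      (θ / N) * Real.sqrt ((sm ⬝ᵥ w) * (N - sm ⬝ᵥ w) *
        ((Nk - sk ⬝ᵥ w) * (N - Nk + sk ⬝ᵥ w))) := by
  classical
  have hNR : (0:ℝ) < N := by exact_mod_cast hN
  set Q : Matrix (Fin N) (Fin N) ℝ := Matrix.diagonal (fun k => ∑ j, A k j) - A with hQdef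
  have hQz : ∀ i, Q.mulVec (z i) = μ i • z i := hz_eig
  have hQsymm : Qᵀ = Q := by
    have hA : Aᵀ = A := hAsymm
    simp [hQdef, Matrix.transpose_sub, Matrix.diagonal_transpose, hA]
  set Z : Matrix (Fin N) (Fin N) ℝ := Matrix.of (fun i j => z i j) with hZdef
  have hZZt : Z * Zᵀ = 1 := by
    ext i j
    have h := hz_orth i j
    simpa [Matrix.mul_apply, Matrix.one_apply, dotProduct, hZdef] using h
  have hZtZ : Zᵀ * Z = 1 := mul_eq_one_comm.mp hZZt
  -- Parseval identity
  have parseval : ∀ v v' : Fin N → ℝ,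
      ∑ i, (z i ⬝ᵥ v) * (z i ⬝ᵥ v') = v ⬝ᵥ v' := by
    intro v v'
    have h : Z.mulVec v ⬝ᵥ Z.mulVec v' = v ⬝ᵥ v' := by
      rw [Matrix.dotProduct_mulVec, ← Matrix.mulVec_transpose, Matrix.mulVec_mulVec, hZtZ,
        Matrix.one_mulVec]
    exact h
  -- spectral decomposition of Q
  have hQZ : Q = Zᵀ * Matrix.diagonal μ * Z := by
    have h1 : Q * Zᵀ = Zᵀ * Matrix.diagonal μ := by
      ext i j
      have h2 := congrFun (hQz j) i
      simp only [Matrix.mulVec, dotProduct, Pi.smul_apply, smul_eq_mul] at h2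
      rw [Matrix.mul_apply, Matrix.mul_diagonal, Matrix.transpose_apply]
      simpa [hZdef, mul_comm] using h2
    calc Q = Q * (Zᵀ * Z) := by rw [hZtZ, mul_one]
      _ = (Q * Zᵀ) * Z := by rw [mul_assoc]
      _ = Zᵀ * Matrix.diagonal μ * Z := by rw [h1]
  have hQform : ∀ v v' : Fin N → ℝ,
      v ⬝ᵥ Q.mulVec v' = ∑ i, μ i * ((z i ⬝ᵥ v) * (z i ⬝ᵥ v')) := by
    intro v v'
    have h : v ⬝ᵥ Q.mulVec v'
        = Z.mulVec v ⬝ᵥ (Matrix.diagonal μ).mulVec (Z.mulVec v') := by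
      rw [hQZ, ← Matrix.mulVec_mulVec, ← Matrix.mulVec_mulVec,
        Matrix.dotProduct_mulVec, Matrix.vecMul_transpose]
    rw [h]
    show ∑ i, (Z.mulVec v) i * ((Matrix.diagonal μ).mulVec (Z.mulVec v')) i = _
    refine Finset.sum_congr rfl fun i _ => ?_
    rw [Matrix.mulVec_diagonal]
    show (z i ⬝ᵥ v) * (μ i * (z i ⬝ᵥ v')) = μ i * ((z i ⬝ᵥ v) * (z i ⬝ᵥ v'))
    ring
  -- scalar setup
  set x : Fin N → ℝ := fun i => (1 - w i) * sk i with hxdef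
  set y : Fin N → ℝ := fun i => w i * sm i with hydef
  set X : ℝ := Nk - sk ⬝ᵥ w with hXdef
  set Y : ℝ := sm ⬝ᵥ w with hYdef
  have hsk01 : ∀ i, sk i = 0 ∨ sk i = 1 := by
    intro i; rw [hsk]; by_cases h : i ∈ Sk <;> simp [h]
  have hsm01 : ∀ i, sm i = 0 ∨ sm i = 1 := by
    intro i; rw [hsm]; by_cases h : i ∈ Sm <;> simp [h]
  have hsksm : ∀ i, sk i * sm i = 0 := by
    intro i; rw [hsk, hsm]
    by_cases h : i ∈ Sk
    · have : i ∉ Sm := Finset.disjoint_left.mp hdisj h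
      simp [h, this]
    · simp [h]
  have hxy0 : ∀ i, x i * y i = 0 := by
    intro i
    have h : x i * y i = ((1 - w i) * w i) * (sk i * sm i) := by
      simp only [hxdef, hydef]; ring
    rw [h, hsksm i, mul_zero]
  have hsumsk : ∑ i, sk i = Nk := by rw [hsk, hNk]; simp
  have hsumx : ∑ i, x i = X := by
    rw [hXdef, ← hsumsk]
    have h : sk ⬝ᵥ w = ∑ i, sk i * w i := rfl
    rw [h, ← Finset.sum_sub_distrib]
    exact Finset.sum_congr rfl fun i _ => by simp only [hxdef]; ring
  have hsumy : ∑ i, y i = Y := by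
    rw [hYdef]
    have h : sm ⬝ᵥ w = ∑ i, sm i * w i := rfl
    rw [h]
    exact Finset.sum_congr rfl fun i _ => by simp only [hydef]; ring
  have hxsq : ∀ i, x i * x i = x i := by
    intro i
    rcases hw i with h1 | h1 <;> rcases hsk01 i with h2 | h2 <;>
      simp [hxdef, h1, h2]
  have hysq : ∀ i, y i * y i = y i := by
    intro i
    rcases hw i with h1 | h1 <;> rcases hsm01 i with h2 | h2 <;>
      simp [hydef, h1, h2]
  -- projected vectors
  set x' : Fin N → ℝ := fun i => x i - X / N with hx'def
  set y' : Fin N → ℝ := fun i => y i - Y / N with hy'def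
  have hcard : ∑ _i : Fin N, (1:ℝ) = (N:ℝ) := by simp
  have hx'x' : x' ⬝ᵥ x' = X - X * X / N := by
    have h1 : ∀ i, x' i * x' i = x i - (2 * (X / N)) * x i + (X / N) * (X / N) := by
      intro i
      calc x' i * x' i = x i * x i - (2 * (X / N)) * x i + (X / N) * (X / N) := by
            simp only [hx'def]; ring
        _ = _ := by rw [hxsq i]
    show ∑ i, x' i * x' i = X - X * X / N
    rw [Finset.sum_congr rfl fun i _ => h1 i]
    rw [Finset.sum_add_distrib, Finset.sum_sub_distrib, ← Finset.mul_sum, hsumx,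
      Finset.sum_const, Finset.card_univ, Fintype.card_fin, nsmul_eq_mul]
    field_simp
    ring
  have hy'y' : y' ⬝ᵥ y' = Y - Y * Y / N := by
    have h1 : ∀ i, y' i * y' i = y i - (2 * (Y / N)) * y i + (Y / N) * (Y / N) := by
      intro i
      calc y' i * y' i = y i * y i - (2 * (Y / N)) * y i + (Y / N) * (Y / N) := by
            simp only [hy'def]; ring
        _ = _ := by rw [hysq i]
    show ∑ i, y' i * y' i = Y - Y * Y / N
    rw [Finset.sum_congr rfl fun i _ => h1 i]
    rw [Finset.sum_add_distrib, Finset.sum_sub_distrib, ← Finset.mul_sum, hsumy,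
      Finset.sum_const, Finset.card_univ, Fintype.card_fin, nsmul_eq_mul]
    field_simp
    ring
  have hx'y' : x' ⬝ᵥ y' = -(X * Y) / N := by
    have h1 : ∀ i, x' i * y' i
        = x i * y i - (Y / N) * x i - (X / N) * y i + (X / N) * (Y / N) := by
      intro i; simp only [hx'def, hy'def]; ring
    show ∑ i, x' i * y' i = -(X * Y) / N
    rw [Finset.sum_congr rfl fun i _ => (by rw [h1 i, hxy0 i] :
      x' i * y' i = 0 - (Y / N) * x i - (X / N) * y i + (X / N) * (Y / N))]
    rw [Finset.sum_add_distrib, Finset.sum_sub_distrib, Finset.sum_sub_distrib,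
      ← Finset.mul_sum, ← Finset.mul_sum, hsumx, hsumy, Finset.sum_const,
      Finset.sum_const, Finset.card_univ, Fintype.card_fin, nsmul_eq_mul, nsmul_eq_mul]
    field_simp
    ring
  -- Laplacian kills constants
  have hQu : Q.mulVec (fun _ => (1:ℝ)) = 0 := by
    funext k
    simp [hQdef, Matrix.sub_mulVec, Matrix.mulVec, dotProduct, Matrix.diagonal_apply,
      Finset.sum_ite_eq]
  have huQ : ∀ v : Fin N → ℝ, (fun _ => (1:ℝ)) ⬝ᵥ Q.mulVec v = 0 := by
    intro v
    rw [Matrix.dotProduct_mulVec, ← hQsymm, Matrix.vecMul_transpose, hQu]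
    simp
  -- x' ⬝ Q y' = - x ⬝ A y
  have hxQ : x' ⬝ᵥ Q.mulVec y' = -(x ⬝ᵥ A.mulVec y) := by
    have hy'e : y' = y - (Y / N) • (fun _ => (1:ℝ)) := by
      funext i; simp [hy'def]
    have hx'e : x' = x - (X / N) • (fun _ => (1:ℝ)) := by
      funext i; simp [hx'def]
    have h1 : Q.mulVec y' = Q.mulVec y := by
      rw [hy'e, Matrix.mulVec_sub, Matrix.mulVec_smul, hQu, smul_zero, sub_zero]
    rw [h1, hx'e, sub_dotProduct, smul_dotProduct, huQ y, smul_zero, sub_zero]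
    have h2 : x ⬝ᵥ (Matrix.diagonal fun k => ∑ j, A k j).mulVec y = 0 := by
      show ∑ i, x i * ((Matrix.diagonal fun k => ∑ j, A k j).mulVec y) i = 0
      refine Finset.sum_eq_zero fun i _ => ?_
      rw [Matrix.mulVec_diagonal]
      rw [show x i * ((∑ j, A i j) * y i) = (∑ j, A i j) * (x i * y i) from by ring,
        hxy0 i, mul_zero]
    rw [hQdef, Matrix.sub_mulVec, dotProduct_sub, h2, zero_sub]
  -- main spectral identity
  have key : ∑ i, ((N:ℝ) * akm - μ i) * ((z i ⬝ᵥ x') * (z i ⬝ᵥ y'))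
      = x ⬝ᵥ A.mulVec y - akm * (X * Y) := by
    have h1 : ∑ i, ((N:ℝ) * akm - μ i) * ((z i ⬝ᵥ x') * (z i ⬝ᵥ y'))
        = ((N:ℝ) * akm) * (x' ⬝ᵥ y') - x' ⬝ᵥ Q.mulVec y' := by
      rw [hQform x' y', ← parseval x' y', Finset.mul_sum, ← Finset.sum_sub_distrib]
      exact Finset.sum_congr rfl fun i _ => by ring
    rw [h1, hx'y', hxQ]
    field_simp
    ring
  -- per-eigenvalue bound
  have hbound : ∀ i : Fin N, |((N:ℝ) * akm - μ i) * ((z i ⬝ᵥ x') * (z i ⬝ᵥ y'))|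
      ≤ θ * (|z i ⬝ᵥ x'| * |z i ⬝ᵥ y'|) := by
    intro i
    rcases lt_or_ge (i : ℕ) (N - 1) with h | h
    · rw [abs_mul, abs_mul]
      exact mul_le_mul_of_nonneg_right (hθ i h) (by positivity)
    · have hival : (i : ℕ) = N - 1 := by have := i.isLt; omega
      have hμi : μ i = 0 := by
        have : i = (⟨N - 1, by omega⟩ : Fin N) := Fin.ext hival
        rw [this]; exact hμ_last
      by_cases hker : ∃ j : Fin N, (j : ℕ) < N - 1 ∧ μ j = 0
      · obtain ⟨j, hj1, hj2⟩ := hker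
        have hb : |(N:ℝ) * akm - μ i| ≤ θ := by
          rw [hμi]
          have := hθ j hj1
          rw [hj2] at this
          simpa using this
        rw [abs_mul, abs_mul]
        exact mul_le_mul_of_nonneg_right hb (by positivity)
      · push_neg at hker
        have hju : ∀ j : Fin N, j ≠ i → z j ⬝ᵥ (fun _ => (1:ℝ)) = 0 := by
          intro j hj
          have hjlt : (j : ℕ) < N - 1 := by
            have h1 := j.isLt
            have h2 : (j : ℕ) ≠ N - 1 := fun hc => hj (Fin.ext (by rw [hc, hival]))
            omega
          have hμj := hker j hjlt
          have h0 : z j ⬝ᵥ Q.mulVec (fun _ => (1:ℝ))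
              = μ j * (z j ⬝ᵥ (fun _ => (1:ℝ))) := by
            rw [Matrix.dotProduct_mulVec, ← hQsymm, Matrix.vecMul_transpose, hQz j,
              smul_dotProduct, smul_eq_mul]
          rw [hQu] at h0
          simp only [dotProduct_zero] at h0
          exact (mul_eq_zero.mp h0.symm).resolve_left hμj
        have hux' : (fun _ => (1:ℝ)) ⬝ᵥ x' = 0 := by
          show ∑ k, (1:ℝ) * x' k = 0
          simp only [one_mul, hx'def]
          rw [Finset.sum_sub_distrib, hsumx, Finset.sum_const, Finset.card_univ,
            Fintype.card_fin, nsmul_eq_mul]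
          field_simp
          ring
        have hpar1 : (z i ⬝ᵥ (fun _ => (1:ℝ))) * (z i ⬝ᵥ x') = 0 := by
          have hp := parseval (fun _ => (1:ℝ)) x'
          rw [hux'] at hp
          rw [Finset.sum_eq_single i (fun j _ hj => by rw [hju j hj, zero_mul])
            (fun hi => absurd (Finset.mem_univ i) hi)] at hp
          exact hp
        have hpar2 : (z i ⬝ᵥ (fun _ => (1:ℝ))) * (z i ⬝ᵥ (fun _ => (1:ℝ))) = (N:ℝ) := by
          have hp := parseval (fun _ => (1:ℝ)) (fun _ => (1:ℝ))
          have huu : ((fun _ => (1:ℝ)) : Fin N → ℝ) ⬝ᵥ ((fun _ => (1:ℝ)) : Fin N → ℝ) = (N:ℝ) := by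
            show ∑ _k : Fin N, (1:ℝ) * 1 = (N:ℝ); simp
          rw [huu] at hp
          rw [Finset.sum_eq_single i (fun j _ hj => by rw [hju j hj, zero_mul])
            (fun hi => absurd (Finset.mem_univ i) hi)] at hp
          exact hp
        have hziu : z i ⬝ᵥ (fun _ => (1:ℝ)) ≠ 0 := by
          intro hc
          rw [hc, zero_mul] at hpar2
          exact absurd hpar2.symm (ne_of_gt hNR)
        have hzero : z i ⬝ᵥ x' = 0 := (mul_eq_zero.mp hpar1).resolve_left hziu
        rw [hzero]
        simp [hθ0]
  -- nonnegativity of norms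
  have hsq1 : ∑ i, |z i ⬝ᵥ x'| ^ 2 = x' ⬝ᵥ x' := by
    rw [← parseval x' x']
    exact Finset.sum_congr rfl fun i _ => by rw [sq_abs]; ring
  have hsq2 : ∑ i, |z i ⬝ᵥ y'| ^ 2 = y' ⬝ᵥ y' := by
    rw [← parseval y' y']
    exact Finset.sum_congr rfl fun i _ => by rw [sq_abs]; ring
  have hx'nn : (0:ℝ) ≤ x' ⬝ᵥ x' := by rw [← hsq1]; positivity
  have hy'nn : (0:ℝ) ≤ y' ⬝ᵥ y' := by rw [← hsq2]; positivity
  -- Cauchy-Schwarz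
  have cs : ∑ i, |z i ⬝ᵥ x'| * |z i ⬝ᵥ y'|
      ≤ Real.sqrt (x' ⬝ᵥ x') * Real.sqrt (y' ⬝ᵥ y') := by
    have h1 := Finset.sum_mul_sq_le_sq_mul_sq Finset.univ
      (fun i => |z i ⬝ᵥ x'|) (fun i => |z i ⬝ᵥ y'|)
    calc ∑ i, |z i ⬝ᵥ x'| * |z i ⬝ᵥ y'|
        = Real.sqrt ((∑ i, |z i ⬝ᵥ x'| * |z i ⬝ᵥ y'|) ^ 2) :=
          (Real.sqrt_sq (Finset.sum_nonneg fun i _ =>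
            mul_nonneg (abs_nonneg _) (abs_nonneg _))).symm
      _ ≤ Real.sqrt ((x' ⬝ᵥ x') * (y' ⬝ᵥ y')) := by
          apply Real.sqrt_le_sqrt
          rw [← hsq1, ← hsq2]
          exact h1
      _ = Real.sqrt (x' ⬝ᵥ x') * Real.sqrt (y' ⬝ᵥ y') := Real.sqrt_mul hx'nn _
  -- assemble
  have main : |x ⬝ᵥ A.mulVec y - akm * (X * Y)|
      ≤ θ * (Real.sqrt (x' ⬝ᵥ x') * Real.sqrt (y' ⬝ᵥ y')) := by
    rw [← key]
    calc |∑ i, ((N:ℝ) * akm - μ i) * ((z i ⬝ᵥ x') * (z i ⬝ᵥ y'))|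
        ≤ ∑ i, |((N:ℝ) * akm - μ i) * ((z i ⬝ᵥ x') * (z i ⬝ᵥ y'))| :=
          Finset.abs_sum_le_sum_abs _ _
      _ ≤ ∑ i, θ * (|z i ⬝ᵥ x'| * |z i ⬝ᵥ y'|) :=
          Finset.sum_le_sum fun i _ => hbound i
      _ = θ * ∑ i, |z i ⬝ᵥ x'| * |z i ⬝ᵥ y'| := by rw [Finset.mul_sum]
      _ ≤ θ * (Real.sqrt (x' ⬝ᵥ x') * Real.sqrt (y' ⬝ᵥ y')) :=
          mul_le_mul_of_nonneg_left cs hθ0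
  -- rewrite the right-hand side
  have hXnn : (0:ℝ) ≤ X - X * X / N := by rw [← hx'x']; exact hx'nn
  have hYnn : (0:ℝ) ≤ Y - Y * Y / N := by rw [← hy'y']; exact hy'nn
  have hrw : (N:ℝ) - Nk + sk ⬝ᵥ w = (N:ℝ) - X := by rw [hXdef]; ring
  have hfin : (θ / N) * Real.sqrt (Y * ((N:ℝ) - Y) * (X * ((N:ℝ) - X)))
      = θ * (Real.sqrt (x' ⬝ᵥ x') * Real.sqrt (y' ⬝ᵥ y')) := by
    rw [hx'x', hy'y']
    have h1 : Y * ((N:ℝ) - Y) * (X * ((N:ℝ) - X))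
        = ((N:ℝ) ^ 2) * ((X - X * X / N) * (Y - Y * Y / N)) := by
      field_simp
    rw [h1, Real.sqrt_mul (by positivity), Real.sqrt_sq hNR.le,
      Real.sqrt_mul hXnn]
    field_simp
  rw [hrw, hfin]
  exact main
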